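/- Let k be a field with char(k) ≠ 2,3 and let F = X³ + AXZ² + BZ³ - Y²Z with A ≠ 0 and Δ = -16(4A³+27B²) ≠ 0. Then the j-invariant of the Hessian curve of F satisfies j(Hess(F)) = (6912 - j(F))³ / (27·j(F)²), where j(F) = -1728·(4A)³/Δ. -/

import Mathlib

/-- for `E : y² = x³ + Ax + B` with `A ≠ 0`, discriminant nonzero and
`j(E) ≠ 0`, the `j`-invariant of the Hessian curve (in short Weierstrass form, with
coefficients `A' = -(A³/3+3B²)/A⁴`, `B' = -(A³B/3+2B³)/A⁶`) satisfies
`j(Hess(E)) = (6912 - j(E))³ / (27 j(E)²)`. -/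
theorem hessian_j_invariant {K : Type*} [Field K]
    (h2 : (2 : K) ≠ 0) (h3 : (3 : K) ≠ 0) (A B : K) (hA : A ≠ 0)
    (hΔ : 4 * A ^ 3 + 27 * B ^ 2 ≠ 0)
    (hj : (-1728) * (4 * A) ^ 3 / ((-16) * (4 * A ^ 3 + 27 * B ^ 2)) ≠ 0) :
    (-1728) * (4 * (-(A ^ 3 / 3 + 3 * B ^ 2) / A ^ 4)) ^ 3 /
        ((-16) * (4 * (-(A ^ 3 / 3 + 3 * B ^ 2) / A ^ 4) ^ 3 +
          27 * (-(A ^ 3 * B / 3 + 2 * B ^ 3) / A ^ 6) ^ 2)) =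
      (6912 - (-1728) * (4 * A) ^ 3 / ((-16) * (4 * A ^ 3 + 27 * B ^ 2))) ^ 3 /
        (27 * ((-1728) * (4 * A) ^ 3 / ((-16) * (4 * A ^ 3 + 27 * B ^ 2))) ^ 2) := by
  have h27 : (27 : K) ≠ 0 := by
    have := pow_ne_zero 3 h3; norm_num at this ⊢; exact this
  have h16 : (16 : K) ≠ 0 := by
    have := pow_ne_zero 4 h2; norm_num at this ⊢; exact this
  have hd : 4 * (-(A ^ 3 / 3 + 3 * B ^ 2) / A ^ 4) ^ 3 +
      27 * (-(A ^ 3 * B / 3 + 2 * B ^ 3) / A ^ 6) ^ 2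
      = -(4 * A ^ 3 + 27 * B ^ 2) / (27 * A ^ 6) := by
    field_simp
    ring
  rw [hd]
  have hD1 : (-16 : K) * (-(4 * A ^ 3 + 27 * B ^ 2) / (27 * A ^ 6)) ≠ 0 := by
    apply mul_ne_zero (by simpa using h16)
    exact div_ne_zero (neg_ne_zero.mpr hΔ) (mul_ne_zero h27 (pow_ne_zero _ hA))
  have hD2 : 27 * ((-1728 : K) * (4 * A) ^ 3 / ((-16) * (4 * A ^ 3 + 27 * B ^ 2))) ^ 2 ≠ 0 :=
    mul_ne_zero h27 (pow_ne_zero _ hj)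
  rw [div_eq_div_iff hD1 hD2]
  have hΔ' : 4 * A ^ 3 + B ^ 2 * 27 ≠ 0 := by rwa [mul_comm (B ^ 2)]
  field_simp
  ring
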